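/- Let Δ₁, Δ₂ > 0 with Δ₁ ≤ Δ₂ and let ζ ∈ ℂ with Im ζ > 0. Then |(e^{iΔ₂ζ} − e^{iΔ₁ζ})² / ((1 − e^{2iΔ₁ζ})(1 − e^{2iΔ₂ζ}))| ≤ 4 e^{−2Δ₁ Im ζ} / (1 − e^{−2Δ₁ Im ζ})² ≤ 4 / (e^{(Δ₁/2) Im ζ} − 1)². -/

import Mathlib

theorem stmt11 (Δ₁ Δ₂ : ℝ) (hΔ₁ : 0 < Δ₁) (hΔ : Δ₁ ≤ Δ₂) (ζ : ℂ) (hζ : 0 < ζ.im) :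
    ‖(Complex.exp (Complex.I * Δ₂ * ζ) - Complex.exp (Complex.I * Δ₁ * ζ)) ^ 2 /
        ((1 - Complex.exp (2 * Complex.I * Δ₁ * ζ)) *
          (1 - Complex.exp (2 * Complex.I * Δ₂ * ζ)))‖ ≤
      4 * Real.exp (-2 * Δ₁ * ζ.im) / (1 - Real.exp (-2 * Δ₁ * ζ.im)) ^ 2 ∧
    4 * Real.exp (-2 * Δ₁ * ζ.im) / (1 - Real.exp (-2 * Δ₁ * ζ.im)) ^ 2 ≤
      4 / (Real.exp (Δ₁ / 2 * ζ.im) - 1) ^ 2 := by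
  have hΔ₂ : 0 < Δ₂ := hΔ₁.trans_le hΔ
  set y := ζ.im with hy
  have hy0 : 0 < y := hζ
  have key : ∀ a : ℝ, (Complex.I * (a : ℂ) * ζ).re = -(a * y) := by
    intro a
    simp [Complex.mul_re, Complex.mul_im, hy]
  have key2 : ∀ a : ℝ, (2 * Complex.I * (a : ℂ) * ζ).re = -(2 * a * y) := by
    intro a
    simp [Complex.mul_re, Complex.mul_im, hy]
  have habs : ∀ a : ℝ, ‖Complex.exp (Complex.I * (a : ℂ) * ζ)‖ = Real.exp (-(a * y)) := by
    intro a; rw [Complex.norm_exp, key]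
  have habs2 : ∀ a : ℝ, ‖Complex.exp (2 * Complex.I * (a : ℂ) * ζ)‖ = Real.exp (-(2 * a * y)) := by
    intro a; rw [Complex.norm_exp, key2]
  set L := Real.exp (-2 * Δ₁ * y) with hL
  have hL1 : L < 1 := by
    rw [hL]
    apply Real.exp_lt_one_iff.mpr
    nlinarith
  have hLpos : 0 < L := Real.exp_pos _
  -- lower bound on denominators
  have hlb : ∀ a : ℝ, Δ₁ ≤ a → 1 - L ≤ ‖1 - Complex.exp (2 * Complex.I * (a : ℂ) * ζ)‖ := by
    intro a ha
    have h1 : ‖Complex.exp (2 * Complex.I * (a : ℂ) * ζ)‖ ≤ L := by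
      rw [habs2, hL]
      apply Real.exp_le_exp.mpr
      nlinarith
    have h2 : (1 : ℝ) ≤ ‖1 - Complex.exp (2 * Complex.I * (a : ℂ) * ζ)‖ +
        ‖Complex.exp (2 * Complex.I * (a : ℂ) * ζ)‖ := by
      have := norm_add_le (1 - Complex.exp (2 * Complex.I * (a : ℂ) * ζ))
        (Complex.exp (2 * Complex.I * (a : ℂ) * ζ))
      simpa using this
    linarith
  have hd1 := hlb Δ₁ le_rfl
  have hd2 := hlb Δ₂ hΔ
  have h1L : 0 < 1 - L := by linarith
  -- numerator bound
  have hnum : ‖(Complex.exp (Complex.I * (Δ₂ : ℂ) * ζ) - Complex.exp (Complex.I * (Δ₁ : ℂ) * ζ)) ^ 2‖ ≤ 4 * L := by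
    rw [norm_pow]
    have h3 : ‖Complex.exp (Complex.I * (Δ₂ : ℂ) * ζ) - Complex.exp (Complex.I * (Δ₁ : ℂ) * ζ)‖ ≤ 2 * Real.exp (-(Δ₁ * y)) := by
      have := norm_sub_le (Complex.exp (Complex.I * (Δ₂ : ℂ) * ζ)) (Complex.exp (Complex.I * (Δ₁ : ℂ) * ζ))
      rw [habs, habs] at this
      have : Real.exp (-(Δ₂ * y)) ≤ Real.exp (-(Δ₁ * y)) := by
        apply Real.exp_le_exp.mpr; nlinarith
      have h4 := norm_sub_le (Complex.exp (Complex.I * (Δ₂ : ℂ) * ζ)) (Complex.exp (Complex.I * (Δ₁ : ℂ) * ζ))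
      rw [habs, habs] at h4
      linarith
    have hE : Real.exp (-(Δ₁ * y)) ^ 2 = L := by
      rw [hL, ← Real.exp_nat_mul]
      congr 1; ring
    calc ‖Complex.exp (Complex.I * (Δ₂ : ℂ) * ζ) - Complex.exp (Complex.I * (Δ₁ : ℂ) * ζ)‖ ^ 2
        ≤ (2 * Real.exp (-(Δ₁ * y))) ^ 2 := by
          apply pow_le_pow_left₀ (norm_nonneg _) h3
      _ = 4 * L := by rw [← hE]; ring
  constructor
  · rw [norm_div, norm_mul]
    have hdenpos : 0 < ‖1 - Complex.exp (2 * Complex.I * (Δ₁ : ℂ) * ζ)‖ *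
        ‖1 - Complex.exp (2 * Complex.I * (Δ₂ : ℂ) * ζ)‖ :=
      mul_pos (h1L.trans_le hd1) (h1L.trans_le hd2)
    calc ‖(Complex.exp (Complex.I * (Δ₂ : ℂ) * ζ) - Complex.exp (Complex.I * (Δ₁ : ℂ) * ζ)) ^ 2‖ /
          (‖1 - Complex.exp (2 * Complex.I * (Δ₁ : ℂ) * ζ)‖ *
            ‖1 - Complex.exp (2 * Complex.I * (Δ₂ : ℂ) * ζ)‖)
        ≤ (4 * L) / ((1 - L) * (1 - L)) := by
          apply div_le_div₀ (by positivity) hnum (by positivity)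
          exact mul_le_mul hd1 hd2 h1L.le (norm_nonneg _)
      _ = 4 * L / (1 - L) ^ 2 := by ring
  · -- second inequality
    set t := Δ₁ * y with ht
    have ht0 : 0 < t := by positivity
    have hLe : L = Real.exp (-2 * t) := by rw [hL, ht]; ring_nf
    have hb1 : (1 : ℝ) < Real.exp (Δ₁ / 2 * y) := by
      rw [show (1 : ℝ) = Real.exp 0 from Real.exp_zero.symm]
      exact Real.exp_lt_exp.mpr (by positivity)
    have hbp : 0 < Real.exp (Δ₁ / 2 * y) - 1 := by linarith
    rw [div_le_div_iff₀ (by positivity) (by positivity)]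
    have hfact : (1 - L) = Real.exp (-t) * (Real.exp t - Real.exp (-t)) := by
      rw [hLe]
      rw [mul_sub, ← Real.exp_add, ← Real.exp_add]
      ring_nf
      rw [Real.exp_zero]
      ring
    have hhalf : Real.exp (Δ₁ / 2 * y) = Real.exp (t / 2) := by
      rw [ht]; ring_nf
    have hkey : (Real.exp (t / 2) - 1) ^ 2 ≤ (Real.exp t - Real.exp (-t)) ^ 2 := by
      apply pow_le_pow_left₀ (by
        have h7 : (1:ℝ) < Real.exp (t/2) := by
          rw [show (1 : ℝ) = Real.exp 0 from Real.exp_zero.symm]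
          exact Real.exp_lt_exp.mpr (by positivity)
        linarith)
      have h5 : Real.exp (t / 2) ≤ Real.exp t := Real.exp_le_exp.mpr (by linarith)
      have h6 : Real.exp (-t) ≤ 1 := Real.exp_le_one_iff.mpr (by linarith)
      linarith
    have hLsq : L = Real.exp (-t) ^ 2 := by
      rw [hLe, ← Real.exp_nat_mul]; congr 1; ring
    calc 4 * L * (Real.exp (Δ₁ / 2 * y) - 1) ^ 2
        = 4 * Real.exp (-t) ^ 2 * (Real.exp (t / 2) - 1) ^ 2 := by rw [hLsq, hhalf]
      _ ≤ 4 * Real.exp (-t) ^ 2 * (Real.exp t - Real.exp (-t)) ^ 2 := by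
          apply mul_le_mul_of_nonneg_left hkey (by positivity)
      _ = 4 * (Real.exp (-t) * (Real.exp t - Real.exp (-t))) ^ 2 := by ring
      _ = 4 * (1 - L) ^ 2 := by rw [hfact]
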